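/- Assume there exist η ∈ (0, 1) and D > 0 such that for every θ ∈ ℝ and every f ∈ V₁(Ω) one has |P_θ f|₁ ≤ η|f|₁ + D‖f‖_{L¹}. Then for every f ∈ V₁(Ω), Pf belongs to V₁(Ω) and ‖Pf‖_{V₁} ≤ η‖f‖_{V₁} + C‖f‖_{L¹} with C = D + 1 − η. (The uniform Lasota–Yorke inequality passes to the averaged transfer operator.) -/

import Mathlib

open MeasureTheory

/-- The oscillation `osc(f, A)` of `f` over `A`, as the essential supremum of
`|f(y) − f(z)|` over `(y, z) ∈ A × A`, valued in `[0, ∞]`. -/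
noncomputable def osc1 {k : ℕ} (f : EuclideanSpace ℝ (Fin k) → ℝ)
    (A : Set (EuclideanSpace ℝ (Fin k))) : ENNReal :=
  essSup
    (fun p : EuclideanSpace ℝ (Fin k) × EuclideanSpace ℝ (Fin k) =>
      ENNReal.ofReal |f p.1 - f p.2|)
    ((volume : Measure (EuclideanSpace ℝ (Fin k) × EuclideanSpace ℝ (Fin k))).restrict
      (A ×ˢ A))

/-- The seminorm `|f|₁ = sup_{0 < ε < ε₀} ε⁻¹ ∫ osc(f, B_ε(x)) dx`, valued in `[0, ∞]`. -/
noncomputable def seminorm1 {k : ℕ} (ε₀ : ℝ)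
    (f : EuclideanSpace ℝ (Fin k) → ℝ) : ENNReal :=
  ⨆ ε ∈ Set.Ioo (0 : ℝ) ε₀, (ENNReal.ofReal ε)⁻¹ * ∫⁻ x, osc1 f (Metric.ball x ε)

/-- The `L¹`-norm `‖f‖₁ = ∫ |f|`, valued in `[0, ∞]`. -/
noncomputable def l1norm {k : ℕ} (f : EuclideanSpace ℝ (Fin k) → ℝ) : ENNReal :=
  ∫⁻ x, ENNReal.ofReal |f x|

/-- Membership in `V₁(Ω)`: integrable, (essentially) supported in `Ω`, and `|f|₁ < ∞`. -/
def memV1 {k : ℕ} (Ω : Set (EuclideanSpace ℝ (Fin k))) (ε₀ : ℝ)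
    (f : EuclideanSpace ℝ (Fin k) → ℝ) : Prop :=
  Integrable f volume ∧ (∀ᵐ x ∂volume, x ∉ Ω → f x = 0) ∧ seminorm1 ε₀ f < ⊤

open MeasureTheory
open scoped ENNReal NNReal

section Helpers

variable {α β : Type*} [MeasurableSpace α] [MeasurableSpace β]

lemma essSup_eq_iInf_rat (ν : Measure α) (f : α → ℝ≥0∞) :
    essSup f ν = ⨅ q : ℚ, (if ν {a | (Real.toNNReal (q : ℝ) : ℝ≥0∞) < f a} = 0
      then ((Real.toNNReal (q : ℝ)) : ℝ≥0∞) else ⊤) := by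
  apply le_antisymm
  · refine le_iInf fun q => ?_
    split_ifs with h
    · refine essSup_le_of_ae_le _ ?_
      rw [Filter.EventuallyLE, ae_iff]
      simpa [not_le] using h
    · exact le_top
  · refine le_of_not_gt fun hlt => ?_
    obtain ⟨q, _, h1, h2⟩ := ENNReal.lt_iff_exists_rat_btwn.mp hlt
    have hb : ν {a | essSup f ν < f a} = 0 := by
      have := ENNReal.ae_le_essSup (μ := ν) f
      rw [ae_iff] at this
      simpa [not_le] using this
    have hnull : ν {a | (Real.toNNReal (q : ℝ) : ℝ≥0∞) < f a} = 0 :=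
      measure_mono_null (fun a ha => h1.trans ha) hb
    have hle : (⨅ q : ℚ, (if ν {a | (Real.toNNReal (q : ℝ) : ℝ≥0∞) < f a} = 0
        then ((Real.toNNReal (q : ℝ)) : ℝ≥0∞) else ⊤)) ≤ (Real.toNNReal (q : ℝ) : ℝ≥0∞) := by
      refine (iInf_le _ q).trans ?_
      rw [if_pos hnull]
    exact (h2.trans_le hle).false

lemma measurable_essSup_param (ν : Measure α) [SFinite ν] {g : α × β → ℝ≥0∞}
    (hg : Measurable g) : Measurable fun b => essSup (fun a => g (a, b)) ν := by
  simp_rw [essSup_eq_iInf_rat]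
  refine Measurable.iInf fun q => ?_
  have hs : MeasurableSet {p : α × β | (Real.toNNReal (q : ℝ) : ℝ≥0∞) < g p} :=
    measurableSet_lt measurable_const hg
  have hm : Measurable fun b => ν {a | (Real.toNNReal (q : ℝ) : ℝ≥0∞) < g (a, b)} :=
    measurable_measure_prodMk_right hs
  exact Measurable.ite (hm (measurableSet_singleton 0)) measurable_const measurable_const

lemma ae_prod_fst {μ : Measure α} {ν : Measure β} [SFinite μ] [SFinite ν]
    {p : α → Prop} (h : ∀ᵐ x ∂μ, p x) : ∀ᵐ q ∂(μ.prod ν), p q.1 := by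
  rw [ae_iff] at h ⊢
  exact Measure.quasiMeasurePreserving_fst.preimage_null h

lemma ae_prod_snd {μ : Measure α} {ν : Measure β} [SFinite μ] [SFinite ν]
    {p : β → Prop} (h : ∀ᵐ x ∂ν, p x) : ∀ᵐ q ∂(μ.prod ν), p q.2 := by
  rw [ae_iff] at h ⊢
  exact Measure.quasiMeasurePreserving_snd.preimage_null h

lemma osc1_congr_ae {k : ℕ} {f₁ f₂ : EuclideanSpace ℝ (Fin k) → ℝ}
    (h : f₁ =ᵐ[volume] f₂) (A : Set (EuclideanSpace ℝ (Fin k))) :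
    osc1 f₁ A = osc1 f₂ A := by
  refine essSup_congr_ae ?_
  have h1 : ∀ᵐ p ∂(volume : Measure (EuclideanSpace ℝ (Fin k) × EuclideanSpace ℝ (Fin k))),
      f₁ p.1 = f₂ p.1 ∧ f₁ p.2 = f₂ p.2 := by
    rw [MeasureTheory.Measure.volume_eq_prod]
    exact (ae_prod_fst h).and (ae_prod_snd h)
  exact (h1.filter_mono (ae_mono Measure.restrict_le_self)).mono fun p hp => by
    simp only [hp.1, hp.2]

end Helpers

section MainHelpers

open MeasureTheory
open scoped ENNReal

lemma ae_ae_of_slices_null {γ : Type*} [MeasurableSpace γ] (μ : Measure γ) [SFinite μ]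
    {T : Set (γ × ℝ)} (hTm : MeasurableSet T)
    (hslice : ∀ θ : ℝ, μ {y | (y, θ) ∈ T} = 0) :
    ∀ᵐ y ∂μ, ∀ᵐ θ ∂(volume : Measure ℝ), (y, θ) ∉ T := by
  have hind : Measurable fun r : γ × ℝ => T.indicator (fun _ => (1 : ℝ≥0∞)) r :=
    measurable_const.indicator hTm
  have h0 : ∫⁻ y, ∫⁻ θ, T.indicator (fun _ => (1 : ℝ≥0∞)) (y, θ) ∂(volume : Measure ℝ) ∂μ
      = 0 := by
    rw [lintegral_lintegral_swap hind.aemeasurable]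
    have hz : ∀ θ : ℝ, ∫⁻ y, T.indicator (fun _ => (1 : ℝ≥0∞)) (y, θ) ∂μ = 0 := by
      intro θ
      have heq : (fun y => T.indicator (fun _ => (1 : ℝ≥0∞)) (y, θ))
          = Set.indicator {y | (y, θ) ∈ T} (fun _ => (1 : ℝ≥0∞)) := by
        funext y
        by_cases h : (y, θ) ∈ T
        · rw [Set.indicator_of_mem h]
          exact (Set.indicator_of_mem (show y ∈ {y | (y, θ) ∈ T} from h)
            (fun _ => (1 : ℝ≥0∞))).symm
        · rw [Set.indicator_of_notMem h]
          exact (Set.indicator_of_notMem (show y ∉ {y | (y, θ) ∈ T} from h)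
            (fun _ => (1 : ℝ≥0∞))).symm
      rw [heq]
      exact (lintegral_indicator_one (measurable_prodMk_right hTm)).trans (hslice θ)
    simp only [hz, lintegral_zero]
  have h1 : ∀ᵐ y ∂μ, ∫⁻ θ, T.indicator (fun _ => (1 : ℝ≥0∞)) (y, θ) ∂(volume : Measure ℝ)
      = 0 := by
    have hm : Measurable fun y => ∫⁻ θ, T.indicator (fun _ => (1 : ℝ≥0∞)) (y, θ)
        ∂(volume : Measure ℝ) := hind.lintegral_prod_right'
    exact (lintegral_eq_zero_iff hm).mp h0
  refine h1.mono fun y hy => ?_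
  have h2 := (lintegral_eq_zero_iff (hind.comp measurable_prodMk_left)).mp hy
  refine h2.mono fun θ hθ => fun hmem => ?_
  simp only [Function.comp_apply, Set.indicator_of_mem hmem, Pi.zero_apply] at hθ
  exact one_ne_zero hθ

end MainHelpers

/-- **Lasota–Yorke inequality for the averaged transfer operator.** If each `P_θ`
satisfies `|P_θ f|₁ ≤ η|f|₁ + D‖f‖₁` on `V₁(Ω)` with constants independent of `θ`, then
for every `f ∈ V₁(Ω)` the averaged operator satisfies `Pf ∈ V₁(Ω)` and
`‖Pf‖_{V₁} ≤ η‖f‖_{V₁} + C‖f‖₁` with `C = D + 1 − η`. -/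
theorem averaged_lasota_yorke (k : ℕ) (hk : 1 ≤ k)
    (Ω : Set (EuclideanSpace ℝ (Fin k))) (hΩcomp : IsCompact Ω)
    (hΩpos : 0 < volume Ω)
    (ε₀ : ℝ) (hε₀ : 0 < ε₀)
    (Pθ : ℝ → (EuclideanSpace ℝ (Fin k) → ℝ) → (EuclideanSpace ℝ (Fin k) → ℝ))
    (hPint : ∀ θ f, Integrable f volume → Integrable (Pθ θ f) volume)
    (hPpos : ∀ θ f, Integrable f volume → 0 ≤ᵐ[volume] f → 0 ≤ᵐ[volume] Pθ θ f)
    (hPnorm : ∀ θ f, Integrable f volume → 0 ≤ᵐ[volume] f →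
      ∫ x, |Pθ θ f x| = ∫ x, |f x|)
    (hPcontr : ∀ θ f, Integrable f volume → l1norm (Pθ θ f) ≤ l1norm f)
    (hPsupp : ∀ θ f, memV1 Ω ε₀ f → ∀ᵐ x ∂volume, x ∉ Ω → Pθ θ f x = 0)
    (H : ℝ → ℝ) (hHmeas : Measurable H) (hH0 : ∀ θ, 0 ≤ H θ) (hH1 : ∫ θ, H θ = 1)
    (Q : (EuclideanSpace ℝ (Fin k) → ℝ) → EuclideanSpace ℝ (Fin k) × ℝ → ℝ)
    (hQmeas : ∀ f, Integrable f volume → Measurable (Q f))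
    (hQ : ∀ f, Integrable f volume → ∀ θ, (fun y => Q f (y, θ)) =ᵐ[volume] Pθ θ f)
    (P : (EuclideanSpace ℝ (Fin k) → ℝ) → EuclideanSpace ℝ (Fin k) → ℝ)
    (hP : ∀ f, P f = fun y => ∫ θ, H θ * Q f (y, θ))
    (η D : ℝ) (hη : η ∈ Set.Ioo (0 : ℝ) 1) (hD : 0 < D)
    (hLY : ∀ θ f, memV1 Ω ε₀ f →
      seminorm1 ε₀ (Pθ θ f)
        ≤ ENNReal.ofReal η * seminorm1 ε₀ f + ENNReal.ofReal D * l1norm f) :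
    ∀ f, memV1 Ω ε₀ f →
      memV1 Ω ε₀ (P f) ∧
      l1norm (P f) + seminorm1 ε₀ (P f)
        ≤ ENNReal.ofReal η * (l1norm f + seminorm1 ε₀ f)
          + ENNReal.ofReal (D + 1 - η) * l1norm f := by
  intro f hf
  obtain ⟨hfi, hfsupp, hfsem⟩ := hf
  have hgm : Measurable (Q f) := hQmeas f hfi
  -- basic facts about H
  have hHint : Integrable H volume := by
    by_contra h
    rw [integral_undef h] at hH1
    norm_num at hH1
  have hHone : ∫⁻ θ, ENNReal.ofReal (H θ) = 1 := by
    rw [← ofReal_integral_eq_lintegral_ofReal hHint (Filter.Eventually.of_forall hH0), hH1,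
      ENNReal.ofReal_one]
  have hHm' : Measurable fun θ => ENNReal.ofReal (H θ) := ENNReal.measurable_ofReal.comp hHmeas
  -- L¹ facts for the slices of Q f
  have hgθ : ∀ θ, ∫⁻ y, ENNReal.ofReal |Q f (y, θ)| ≤ l1norm f := by
    intro θ
    have h1 : ∫⁻ y, ENNReal.ofReal |Q f (y, θ)| = l1norm (Pθ θ f) := by
      refine lintegral_congr_ae ((hQ f hfi θ).mono fun y hy => ?_)
      have hy' : Q f (y, θ) = Pθ θ f y := hy
      simp only [hy']
    rw [h1]
    exact hPcontr θ f hfi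
  have hlf_lt : l1norm f < ⊤ := by
    have h1 := hfi.hasFiniteIntegral
    rw [HasFiniteIntegral] at h1
    simpa only [l1norm, ← Real.enorm_eq_ofReal_abs] using h1
  -- the double integral bound
  have hdmeas : Measurable fun r : EuclideanSpace ℝ (Fin k) × ℝ =>
      ENNReal.ofReal (H r.2) * ENNReal.ofReal |Q f r| :=
    (hHm'.comp measurable_snd).mul (ENNReal.measurable_ofReal.comp hgm.abs)
  have hdouble : ∫⁻ y, ∫⁻ θ, ENNReal.ofReal (H θ) * ENNReal.ofReal |Q f (y, θ)| ≤ l1norm f := by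
    rw [lintegral_lintegral_swap hdmeas.aemeasurable]
    calc ∫⁻ θ, ∫⁻ y, ENNReal.ofReal (H θ) * ENNReal.ofReal |Q f (y, θ)|
        = ∫⁻ θ, ENNReal.ofReal (H θ) * ∫⁻ y, ENNReal.ofReal |Q f (y, θ)| := by
          refine lintegral_congr fun θ => ?_
          exact lintegral_const_mul _ (ENNReal.measurable_ofReal.comp
            ((hgm.comp measurable_prodMk_right).abs))
      _ ≤ ∫⁻ θ, ENNReal.ofReal (H θ) * l1norm f :=
          lintegral_mono fun θ => mul_le_mul_right (hgθ θ) _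
      _ = (∫⁻ θ, ENNReal.ofReal (H θ)) * l1norm f := lintegral_mul_const _ hHm'
      _ = l1norm f := by rw [hHone, one_mul]
  -- P f as an integral
  have hPf : P f = fun y => ∫ θ, H θ * Q f (y, θ) := hP f
  have hPfmeas : StronglyMeasurable (P f) := by
    rw [hPf]
    exact ((hHmeas.comp measurable_snd).mul hgm).stronglyMeasurable.integral_prod_right'
  have hPfptw : ∀ y, ENNReal.ofReal |P f y|
      ≤ ∫⁻ θ, ENNReal.ofReal (H θ) * ENNReal.ofReal |Q f (y, θ)| := by
    intro y
    rw [hPf]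
    calc ENNReal.ofReal |∫ θ, H θ * Q f (y, θ)|
        = (‖∫ θ, H θ * Q f (y, θ)‖₊ : ℝ≥0∞) := (Real.enorm_eq_ofReal_abs _).symm
      _ ≤ ∫⁻ θ, (‖H θ * Q f (y, θ)‖₊ : ℝ≥0∞) := enorm_integral_le_lintegral_enorm _
      _ = ∫⁻ θ, ENNReal.ofReal (H θ) * ENNReal.ofReal |Q f (y, θ)| := by
          refine lintegral_congr fun θ => ?_
          rw [← enorm_eq_nnnorm, Real.enorm_eq_ofReal_abs, abs_mul, ENNReal.ofReal_mul (abs_nonneg _),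
            abs_of_nonneg (hH0 θ)]
  have hl1Pf : l1norm (P f) ≤ l1norm f := le_trans (lintegral_mono hPfptw) hdouble
  have hPfint : Integrable (P f) volume := by
    refine ⟨hPfmeas.aestronglyMeasurable, ?_⟩
    rw [HasFiniteIntegral]
    calc ∫⁻ y, (‖P f y‖₊ : ℝ≥0∞) = l1norm (P f) := by
          simp only [l1norm, ← enorm_eq_nnnorm, Real.enorm_eq_ofReal_abs]
      _ ≤ l1norm f := hl1Pf
      _ < ⊤ := hlf_lt
  -- a.e. integrability in θ
  have haeint : ∀ᵐ y ∂(volume : Measure (EuclideanSpace ℝ (Fin k))),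
      Integrable (fun θ => H θ * Q f (y, θ)) volume := by
    have hfin : ∀ᵐ y ∂(volume : Measure (EuclideanSpace ℝ (Fin k))),
        ∫⁻ θ, ENNReal.ofReal (H θ) * ENNReal.ofReal |Q f (y, θ)| < ⊤ :=
      ae_lt_top hdmeas.lintegral_prod_right' (lt_of_le_of_lt hdouble hlf_lt).ne
    refine hfin.mono fun y hy => ?_
    refine ⟨((hHmeas.mul (hgm.comp measurable_prodMk_left)).aestronglyMeasurable), ?_⟩
    rw [HasFiniteIntegral]
    calc ∫⁻ θ, (‖H θ * Q f (y, θ)‖₊ : ℝ≥0∞)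
        = ∫⁻ θ, ENNReal.ofReal (H θ) * ENNReal.ofReal |Q f (y, θ)| := by
          refine lintegral_congr fun θ => ?_
          rw [← enorm_eq_nnnorm, Real.enorm_eq_ofReal_abs, abs_mul, ENNReal.ofReal_mul (abs_nonneg _),
            abs_of_nonneg (hH0 θ)]
      _ < ⊤ := hy
  -- support of P f
  have hΩm : MeasurableSet Ω := hΩcomp.isClosed.measurableSet
  have hPfsupp : ∀ᵐ y ∂(volume : Measure (EuclideanSpace ℝ (Fin k))),
      y ∉ Ω → P f y = 0 := by
    set T : Set (EuclideanSpace ℝ (Fin k) × ℝ) := {r | r.1 ∉ Ω ∧ Q f r ≠ 0} with hT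
    have hTm : MeasurableSet T :=
      (measurable_fst hΩm.compl).inter ((hgm (measurableSet_singleton 0)).compl)
    have hslice : ∀ θ : ℝ, volume {y | (y, θ) ∈ T} = 0 := by
      intro θ
      have h3 : ∀ᵐ y ∂(volume : Measure (EuclideanSpace ℝ (Fin k))), ¬((y, θ) ∈ T) := by
        filter_upwards [hPsupp θ f ⟨hfi, hfsupp, hfsem⟩, hQ f hfi θ] with y hy1 hy2
        simp only [hT, Set.mem_setOf_eq, not_and, not_not]
        intro hyΩ
        have hy2' : Q f (y, θ) = Pθ θ f y := hy2
        rw [hy2']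
        exact hy1 hyΩ
      rw [ae_iff] at h3
      simpa using h3
    have hTnull := ae_ae_of_slices_null volume hTm hslice
    filter_upwards [hTnull] with y hy hyΩ
    simp only [hPf]
    have hz : (fun θ => H θ * Q f (y, θ)) =ᵐ[volume] 0 := by
      filter_upwards [hy] with θ hθ
      have : Q f (y, θ) = 0 := by
        by_contra hne
        exact hθ ⟨hyΩ, hne⟩
      simp [this]
    rw [integral_congr_ae hz]
    simp
  -- the seminorm bound
  set M := ENNReal.ofReal η * seminorm1 ε₀ f + ENNReal.ofReal D * l1norm f with hM
  have hMlt : M < ⊤ :=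
    ENNReal.add_lt_top.mpr ⟨ENNReal.mul_lt_top ENNReal.ofReal_lt_top hfsem,
      ENNReal.mul_lt_top ENNReal.ofReal_lt_top hlf_lt⟩
  have hsem : seminorm1 ε₀ (P f) ≤ M := by
    rw [seminorm1]
    refine iSup₂_le fun ε hε => ?_
    -- joint oscillation function
    set G : (EuclideanSpace ℝ (Fin k) × EuclideanSpace ℝ (Fin k))
        × (EuclideanSpace ℝ (Fin k) × ℝ) → ℝ≥0∞ := fun r =>
      if dist r.1.1 r.2.1 < ε ∧ dist r.1.2 r.2.1 < ε then
        ENNReal.ofReal |Q f (r.1.1, r.2.2) - Q f (r.1.2, r.2.2)| else 0 with hGdef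
    have hGm : Measurable G := by
      refine Measurable.ite ?_ ?_ measurable_const
      · refine MeasurableSet.inter ?_ ?_
        · exact measurableSet_lt (measurable_dist.comp
            ((measurable_fst.fst).prodMk (measurable_snd.fst))) measurable_const
        · exact measurableSet_lt (measurable_dist.comp
            ((measurable_fst.snd).prodMk (measurable_snd.fst))) measurable_const
      · exact ENNReal.measurable_ofReal.comp
          (((hgm.comp ((measurable_fst.fst).prodMk (measurable_snd.snd))).sub
            (hgm.comp ((measurable_fst.snd).prodMk (measurable_snd.snd)))).abs)
    set F : EuclideanSpace ℝ (Fin k) × ℝ → ℝ≥0∞ := fun w =>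
      essSup (fun p => G (p, w)) volume with hFdef
    have hFm : Measurable F := measurable_essSup_param volume hGm
    have hFeq : ∀ (x : EuclideanSpace ℝ (Fin k)) (θ : ℝ),
        F (x, θ) = osc1 (fun y => Q f (y, θ)) (Metric.ball x ε) := by
      intro x θ
      have hset : MeasurableSet ((Metric.ball x ε) ×ˢ (Metric.ball x ε) :
          Set (EuclideanSpace ℝ (Fin k) × EuclideanSpace ℝ (Fin k))) :=
        measurableSet_ball.prod measurableSet_ball
      have heq : (fun p : EuclideanSpace ℝ (Fin k) × EuclideanSpace ℝ (Fin k) =>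
          G (p, (x, θ)))
          = Set.indicator ((Metric.ball x ε) ×ˢ (Metric.ball x ε))
            (fun p => ENNReal.ofReal |Q f (p.1, θ) - Q f (p.2, θ)|) := by
        funext p
        simp only [hGdef]
        by_cases hp : dist p.1 x < ε ∧ dist p.2 x < ε
        · rw [if_pos hp, Set.indicator_of_mem (by
            simpa [Set.mem_prod, Metric.mem_ball] using hp)]
        · rw [if_neg hp, Set.indicator_of_notMem (by
            simpa [Set.mem_prod, Metric.mem_ball] using hp)]
      rw [hFdef]
      show essSup _ _ = _
      rw [heq, ENNReal.essSup_indicator_eq_essSup_restrict hset]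
      rfl
    -- pointwise oscillation bound for P f
    have hxineq : ∀ x : EuclideanSpace ℝ (Fin k),
        osc1 (P f) (Metric.ball x ε) ≤ ∫⁻ θ, ENNReal.ofReal (H θ) * F (x, θ) := by
      intro x
      set B := Metric.ball x ε with hB
      set μB := (volume : Measure (EuclideanSpace ℝ (Fin k)
        × EuclideanSpace ℝ (Fin k))).restrict (B ×ˢ B) with hμB
      have hint2 : ∀ᵐ p ∂μB, Integrable (fun θ => H θ * Q f (p.1, θ)) volume
          ∧ Integrable (fun θ => H θ * Q f (p.2, θ)) volume := by
        refine Filter.Eventually.filter_mono (ae_mono Measure.restrict_le_self) ?_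
        rw [MeasureTheory.Measure.volume_eq_prod]
        exact (ae_prod_fst haeint).and (ae_prod_snd haeint)
      have hswap2 : ∀ᵐ p ∂μB, ∀ᵐ θ ∂(volume : Measure ℝ),
          ENNReal.ofReal |Q f (p.1, θ) - Q f (p.2, θ)| ≤ F (x, θ) := by
        set T : Set ((EuclideanSpace ℝ (Fin k) × EuclideanSpace ℝ (Fin k)) × ℝ) :=
          {r | F (x, r.2) < ENNReal.ofReal |Q f (r.1.1, r.2) - Q f (r.1.2, r.2)|} with hTdef
        have hTm : MeasurableSet T := by
          refine measurableSet_lt ?_ ?_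
          · exact hFm.comp (measurable_const.prodMk measurable_snd)
          · exact ENNReal.measurable_ofReal.comp
              (((hgm.comp ((measurable_fst.fst).prodMk measurable_snd)).sub
                (hgm.comp ((measurable_fst.snd).prodMk measurable_snd))).abs)
        have hslice2 : ∀ θ : ℝ, μB {p | (p, θ) ∈ T} = 0 := by
          intro θ
          have h1 : ∀ᵐ p ∂μB,
              ENNReal.ofReal |Q f (p.1, θ) - Q f (p.2, θ)| ≤ F (x, θ) := by
            rw [hFeq x θ]
            exact ENNReal.ae_le_essSup _
          rw [ae_iff] at h1
          simpa [hTdef, not_le] using h1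
        have := ae_ae_of_slices_null μB hTm hslice2
        refine this.mono fun p hp => hp.mono fun θ hθ => ?_
        simpa [hTdef, not_lt] using hθ
      refine essSup_le_of_ae_le _ ?_
      filter_upwards [hint2, hswap2] with p hp hpb
      simp only [hPf]
      calc ENNReal.ofReal |(∫ θ, H θ * Q f (p.1, θ)) - ∫ θ, H θ * Q f (p.2, θ)|
          = ENNReal.ofReal |∫ θ, (H θ * Q f (p.1, θ) - H θ * Q f (p.2, θ))| := by
            rw [integral_sub hp.1 hp.2]
        _ = (‖∫ θ, (H θ * Q f (p.1, θ) - H θ * Q f (p.2, θ))‖₊ : ℝ≥0∞) :=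
            (Real.enorm_eq_ofReal_abs _).symm
        _ ≤ ∫⁻ θ, (‖H θ * Q f (p.1, θ) - H θ * Q f (p.2, θ)‖₊ : ℝ≥0∞) :=
            enorm_integral_le_lintegral_enorm _
        _ = ∫⁻ θ, ENNReal.ofReal (H θ) * ENNReal.ofReal |Q f (p.1, θ) - Q f (p.2, θ)| := by
            refine lintegral_congr fun θ => ?_
            rw [← enorm_eq_nnnorm, Real.enorm_eq_ofReal_abs, ← mul_sub, abs_mul, abs_of_nonneg (hH0 θ),
              ENNReal.ofReal_mul (hH0 θ)]
        _ ≤ ∫⁻ θ, ENNReal.ofReal (H θ) * F (x, θ) :=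
            lintegral_mono_ae (hpb.mono fun θ h => mul_le_mul_right h _)
    -- assembling the bound for this ε
    set c : ℝ≥0∞ := (ENNReal.ofReal ε)⁻¹ with hc
    have hcne : c ≠ ⊤ := ENNReal.inv_ne_top.mpr (ENNReal.ofReal_pos.mpr hε.1).ne'
    have hmeas2 : Measurable fun r : EuclideanSpace ℝ (Fin k) × ℝ =>
        c * (ENNReal.ofReal (H r.2) * F r) :=
      measurable_const.mul ((hHm'.comp measurable_snd).mul hFm)
    have hθbound : ∀ θ : ℝ, c * ∫⁻ x, F (x, θ) ≤ M := by
      intro θ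
      have heq : ∀ x : EuclideanSpace ℝ (Fin k),
          F (x, θ) = osc1 (Pθ θ f) (Metric.ball x ε) := by
        intro x
        rw [hFeq x θ, osc1_congr_ae (hQ f hfi θ) _]
      calc c * ∫⁻ x, F (x, θ)
          = (ENNReal.ofReal ε)⁻¹ * ∫⁻ x, osc1 (Pθ θ f) (Metric.ball x ε) := by
            rw [hc]
            congr 1
            exact lintegral_congr fun x => heq x
        _ ≤ seminorm1 ε₀ (Pθ θ f) := by
            rw [seminorm1]
            exact le_biSup
              (fun ε => (ENNReal.ofReal ε)⁻¹
                * ∫⁻ x, osc1 (Pθ θ f) (Metric.ball x ε)) hε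
        _ ≤ M := hLY θ f ⟨hfi, hfsupp, hfsem⟩
    calc c * ∫⁻ x, osc1 (P f) (Metric.ball x ε)
        ≤ c * ∫⁻ x, ∫⁻ θ, ENNReal.ofReal (H θ) * F (x, θ) :=
          mul_le_mul_right (lintegral_mono hxineq) c
      _ = ∫⁻ x, ∫⁻ θ, c * (ENNReal.ofReal (H θ) * F (x, θ)) := by
          rw [← lintegral_const_mul' c _ hcne]
          exact lintegral_congr fun x => (lintegral_const_mul' c _ hcne).symm
      _ = ∫⁻ θ, ∫⁻ x, c * (ENNReal.ofReal (H θ) * F (x, θ)) :=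
          lintegral_lintegral_swap hmeas2.aemeasurable
      _ ≤ ∫⁻ θ, ENNReal.ofReal (H θ) * M := by
          refine lintegral_mono fun θ => ?_
          have h1 : ∫⁻ x, c * (ENNReal.ofReal (H θ) * F (x, θ))
              = ENNReal.ofReal (H θ) * (c * ∫⁻ x, F (x, θ)) := by
            rw [show (fun x : EuclideanSpace ℝ (Fin k) =>
                c * (ENNReal.ofReal (H θ) * F (x, θ)))
              = fun x => (c * ENNReal.ofReal (H θ)) * F (x, θ) by
                funext x; ring]
            rw [lintegral_const_mul' _ _ (ENNReal.mul_ne_top hcne ENNReal.ofReal_ne_top)]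
            ring
          rw [h1]
          exact mul_le_mul_right (hθbound θ) _
      _ = M := by rw [lintegral_mul_const _ hHm', hHone, one_mul]
  refine ⟨⟨hPfint, hPfsupp, lt_of_le_of_lt hsem hMlt⟩, ?_⟩
  have key : ENNReal.ofReal η * (l1norm f + seminorm1 ε₀ f)
      + ENNReal.ofReal (D + 1 - η) * l1norm f = l1norm f + M := by
    have h1 : ENNReal.ofReal η + ENNReal.ofReal (D + 1 - η)
        = ENNReal.ofReal D + 1 := by
      rw [← ENNReal.ofReal_add hη.1.le (by linarith [hη.2]), ← ENNReal.ofReal_one,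
        ← ENNReal.ofReal_add hD.le zero_le_one]
      norm_num
    rw [hM]
    calc ENNReal.ofReal η * (l1norm f + seminorm1 ε₀ f)
        + ENNReal.ofReal (D + 1 - η) * l1norm f
        = (ENNReal.ofReal η + ENNReal.ofReal (D + 1 - η)) * l1norm f
          + ENNReal.ofReal η * seminorm1 ε₀ f := by ring
      _ = (ENNReal.ofReal D + 1) * l1norm f + ENNReal.ofReal η * seminorm1 ε₀ f := by
          rw [h1]
      _ = l1norm f + (ENNReal.ofReal η * seminorm1 ε₀ f
          + ENNReal.ofReal D * l1norm f) := by ring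
  rw [key]
  exact add_le_add hl1Pf hsem
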